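/- Let E be a Banach space over 𝕂 (= ℝ or ℂ), 1 ≤ r ≤ 2, and C > 0, and suppose that every continuous bilinear form B : E × E → 𝕂 is absolutely (1;r,r)-summing with π_{(1;r,r)}(B) ≤ C‖B‖. Then: (i) for every even n ≥ 2, every continuous n-linear form A : E^n → 𝕂 is absolutely (1;r,…,r)-summing with π_{(1;r,…,r)}(A) ≤ C^{n/2}‖A‖; (ii) for every odd n ≥ 3, every continuous n-linear form A : E^n → 𝕂 is absolutely (r;r,…,r)-summing with π_{(r;r,…,r)}(A) ≤ C^{(n−1)/2}‖A‖. -/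

import Mathlib

open scoped BigOperators NNReal ENNReal

/-- The weak `ℓ_r` norm of a finite family `(x_j)` in a normed space:
`sup_{‖φ‖ ≤ 1} (∑_j ‖φ(x_j)‖^r)^(1/r)`. -/
noncomputable def weakNorm (𝕜 : Type*) [RCLike 𝕜] {E : Type*} [NormedAddCommGroup E]
    [NormedSpace 𝕜 E] (r : ℝ) {m : ℕ} (x : Fin m → E) : ℝ :=
  ⨆ φ : {φ : E →L[𝕜] 𝕜 // ‖φ‖ ≤ 1}, (∑ j, ‖φ.1 (x j)‖ ^ r) ^ (1 / r)

section Aux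

variable {𝕜 : Type*} [RCLike 𝕜] {E : Type*} [NormedAddCommGroup E] [NormedSpace 𝕜 E]

lemma le_weakNorm {r : ℝ} (hr : 0 < r) {m : ℕ} (x : Fin m → E)
    (φ : E →L[𝕜] 𝕜) (hφ : ‖φ‖ ≤ 1) :
    (∑ j, ‖φ (x j)‖ ^ r) ^ (1 / r) ≤ weakNorm 𝕜 r x := by
  have hbdd : BddAbove (Set.range fun ψ : {ψ : E →L[𝕜] 𝕜 // ‖ψ‖ ≤ 1} =>
      (∑ j, ‖ψ.1 (x j)‖ ^ r) ^ (1 / r)) := by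
    refine ⟨(∑ j, ‖x j‖ ^ r) ^ (1 / r), ?_⟩
    rintro v ⟨ψ, rfl⟩
    refine Real.rpow_le_rpow (Finset.sum_nonneg fun j _ => Real.rpow_nonneg (norm_nonneg _) r)
      (Finset.sum_le_sum fun j _ => Real.rpow_le_rpow (norm_nonneg _) ?_ hr.le)
      (by positivity)
    calc ‖ψ.1 (x j)‖ ≤ ‖ψ.1‖ * ‖x j‖ := ψ.1.le_opNorm _
      _ ≤ 1 * ‖x j‖ := by gcongr; exact ψ.2
      _ = ‖x j‖ := one_mul _
  exact le_ciSup hbdd ⟨φ, hφ⟩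

lemma weakNorm_nonneg {r : ℝ} (hr : 0 < r) {m : ℕ} (x : Fin m → E) :
    0 ≤ weakNorm 𝕜 r x := by
  have h := le_weakNorm hr x (0 : E →L[𝕜] 𝕜) (by simp)
  simpa [Real.zero_rpow hr.ne', Real.zero_rpow (one_div_ne_zero hr.ne'), Real.zero_rpow (inv_ne_zero hr.ne'), one_div] using h

lemma exists_phase (a : 𝕜) : ∃ ε : 𝕜, ‖ε‖ ≤ 1 ∧ ε * a = (‖a‖ : 𝕜) := by
  by_cases h : a = 0
  · exact ⟨0, by simp [h]⟩
  · refine ⟨(starRingEnd 𝕜) a * (‖a‖ : 𝕜)⁻¹, ?_, ?_⟩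
    · rw [norm_mul, RCLike.norm_conj, norm_inv, RCLike.norm_ofReal,
        abs_of_nonneg (norm_nonneg a)]
      exact le_of_eq (mul_inv_cancel₀ (norm_ne_zero_iff.2 h))
    · have hc := RCLike.conj_mul a
      have hn : (‖a‖ : 𝕜) ≠ 0 := by
        simpa using (norm_ne_zero_iff.2 h)
      field_simp
      rw [mul_comm ((starRingEnd 𝕜) a) a, RCLike.mul_conj a]

end Aux

section Slices

variable {𝕜 : Type*} [RCLike 𝕜] {E : Type*} [NormedAddCommGroup E] [NormedSpace 𝕜 E]

/-- Fix the first two coordinates of an `(n+2)`-linear map. -/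
noncomputable def fixTwo {n : ℕ} (A : ContinuousMultilinearMap 𝕜 (fun _ : Fin (n+2) => E) 𝕜)
    (u v : E) : ContinuousMultilinearMap 𝕜 (fun _ : Fin n => E) 𝕜 :=
  MultilinearMap.mkContinuous
    { toFun := fun w => A (Fin.cons u (Fin.cons v w))
      map_update_add' := by
        intro dec w i a b
        obtain rfl : dec = instDecidableEqFin _ := Subsingleton.elim _ _
        have h := A.map_update_add (Fin.cons u (Fin.cons v w)) i.succ.succ a b
        simpa [← Fin.cons_update] using h
      map_update_smul' := by
        intro dec w i c a
        obtain rfl : dec = instDecidableEqFin _ := Subsingleton.elim _ _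
        have h := A.map_update_smul (Fin.cons u (Fin.cons v w)) i.succ.succ c a
        simpa [← Fin.cons_update] using h }
    (‖A‖ * ‖u‖ * ‖v‖)
    (fun w => by
      refine (A.le_opNorm _).trans (le_of_eq ?_)
      have : (∏ i, ‖(Fin.cons u (Fin.cons v w) : Fin (n+2) → E) i‖) = ‖u‖ * (‖v‖ * ∏ i, ‖w i‖) := by
        simp [Fin.prod_univ_succ]
      rw [this]; ring)

@[simp] lemma fixTwo_apply {n : ℕ} (A : ContinuousMultilinearMap 𝕜 (fun _ : Fin (n+2) => E) 𝕜)
    (u v : E) (w : Fin n → E) : fixTwo A u v w = A (Fin.cons u (Fin.cons v w)) := by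
    simp [fixTwo]

lemma fixTwo_norm {n : ℕ} (A : ContinuousMultilinearMap 𝕜 (fun _ : Fin (n+2) => E) 𝕜)
    (u v : E) : ‖fixTwo A u v‖ ≤ ‖A‖ * ‖u‖ * ‖v‖ :=
  MultilinearMap.mkContinuous_norm_le _ (by positivity) _

/-- Fix the last `n` coordinates of an `(n+2)`-linear map, leaving a bilinear map. -/
noncomputable def fixRest {n : ℕ} (A : ContinuousMultilinearMap 𝕜 (fun _ : Fin (n+2) => E) 𝕜)
    (w : Fin n → E) : ContinuousMultilinearMap 𝕜 (fun _ : Fin 2 => E) 𝕜 :=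
  MultilinearMap.mkContinuous
    { toFun := fun g => A (Fin.cons (g 0) (Fin.cons (g 1) w))
      map_update_add' := by
        intro dec g i a b
        obtain rfl : dec = instDecidableEqFin _ := Subsingleton.elim _ _
        induction i using Fin.cases with
        | zero =>
          have h := A.map_update_add (Fin.cons (g 0) (Fin.cons (g 1) w)) 0 a b
          simp only [Fin.update_cons_zero] at h
          simpa [Function.update_self, Function.update_of_ne (show (1:Fin 2) ≠ 0 by decide)]
            using h
        | succ i' =>
          obtain rfl : i' = 0 := Fin.eq_zero i'
          have h := A.map_update_add (Fin.cons (g 0) (Fin.cons (g 1) w)) ((0 : Fin (n+1)).succ) a b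
          simp only [← Fin.cons_update, Fin.update_cons_zero] at h
          simpa [Fin.succ_zero_eq_one, Function.update_self,
            Function.update_of_ne (show (0:Fin 2) ≠ 1 by decide)] using h
      map_update_smul' := by
        intro dec g i c a
        obtain rfl : dec = instDecidableEqFin _ := Subsingleton.elim _ _
        induction i using Fin.cases with
        | zero =>
          have h := A.map_update_smul (Fin.cons (g 0) (Fin.cons (g 1) w)) 0 c a
          simp only [Fin.update_cons_zero] at h
          simpa [Function.update_self, Function.update_of_ne (show (1:Fin 2) ≠ 0 by decide)]
            using h
        | succ i' =>
          obtain rfl : i' = 0 := Fin.eq_zero i'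
          have h := A.map_update_smul (Fin.cons (g 0) (Fin.cons (g 1) w)) ((0 : Fin (n+1)).succ) c a
          simp only [← Fin.cons_update, Fin.update_cons_zero] at h
          simpa [Fin.succ_zero_eq_one, Function.update_self,
            Function.update_of_ne (show (0:Fin 2) ≠ 1 by decide)] using h }
    (‖A‖ * ∏ i, ‖w i‖)
    (fun g => by
      refine (A.le_opNorm _).trans (le_of_eq ?_)
      have h1 : (∏ i, ‖(Fin.cons (g 0) (Fin.cons (g 1) w) : Fin (n+2) → E) i‖)
          = ‖g 0‖ * (‖g 1‖ * ∏ i, ‖w i‖) := by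
        simp [Fin.prod_univ_succ]
      have h2 : (∏ i, ‖g i‖) = ‖g 0‖ * ‖g 1‖ := by
        simp [Fin.prod_univ_two]
      rw [h1, h2]; ring)

@[simp] lemma fixRest_apply {n : ℕ} (A : ContinuousMultilinearMap 𝕜 (fun _ : Fin (n+2) => E) 𝕜)
    (w : Fin n → E) (g : Fin 2 → E) :
    fixRest A w g = A (Fin.cons (g 0) (Fin.cons (g 1) w)) := by
  simp [fixRest]

lemma cons_decomp {n : ℕ} {E : Type*} (f : Fin (n+2) → E) :
    (Fin.cons (f 0) (Fin.cons (f 1) (fun i => f i.succ.succ)) : Fin (n+2) → E) = f := by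
  funext i
  induction i using Fin.cases with
  | zero => simp
  | succ i' =>
    induction i' using Fin.cases with
    | zero => simp [Fin.succ_zero_eq_one]
    | succ i'' => simp

end Slices

section Signs

variable {𝕜 : Type*} [RCLike 𝕜]

/-- A `±1` sign in `𝕜` attached to a boolean. -/
def sgn (𝕜 : Type*) [RCLike 𝕜] (b : Bool) : 𝕜 := if b then 1 else -1

@[simp] lemma norm_sgn (b : Bool) : ‖sgn 𝕜 b‖ = 1 := by cases b <;> simp [sgn]

@[simp] lemma sgn_mul_self (b : Bool) : sgn 𝕜 b * sgn 𝕜 b = 1 := by cases b <;> simp [sgn]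

lemma sgn_not (b : Bool) : sgn 𝕜 (!b) = - sgn 𝕜 b := by cases b <;> simp [sgn]

lemma orth {m : ℕ} (j k : Fin m) :
    ∑ σ : Fin m → Bool, sgn 𝕜 (σ j) * sgn 𝕜 (σ k)
      = if j = k then ((2 ^ m : ℕ) : 𝕜) else 0 := by
  rcases eq_or_ne j k with rfl | hjk
  · simp only [if_pos rfl, sgn_mul_self]
    rw [Finset.sum_const, Finset.card_univ]
    simp [Fintype.card_fun]
  · rw [if_neg hjk]
    refine Finset.sum_ninvolution (fun σ => Function.update σ j (!(σ j))) ?_ ?_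
      (fun _ => Finset.mem_univ _) ?_
    · intro σ
      rw [Function.update_self, Function.update_of_ne (Ne.symm hjk), sgn_not]
      ring
    · intro σ _
      intro hσ
      have := congrFun hσ j
      simp only [Function.update_self] at this
      exact (Bool.not_ne_self _) this
    · intro σ
      funext i
      rcases eq_or_ne i j with rfl | hij
      · simp
      · simp [Function.update_of_ne hij]

end Signs

section Core

variable {𝕜 : Type*} [RCLike 𝕜] {E : Type*} [NormedAddCommGroup E] [NormedSpace 𝕜 E]

lemma core {r C : ℝ} (hr : 0 < r) (hC : 0 < C)
    (hbil : ∀ B : ContinuousMultilinearMap 𝕜 (fun _ : Fin 2 => E) 𝕜,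
      ∀ (m : ℕ) (x : Fin 2 → Fin m → E),
        ∑ j, ‖B (fun i => x i j)‖ ≤ C * ‖B‖ * ∏ i, weakNorm 𝕜 r (x i))
    {n m : ℕ} (A : ContinuousMultilinearMap 𝕜 (fun _ : Fin (n+2) => E) 𝕜)
    (x : Fin (n+2) → Fin m → E) (c : Fin m → ℝ) (hc : ∀ j, 0 ≤ c j)
    {D : ℝ} (hD : 0 ≤ D)
    (hIH : ∀ G : ContinuousMultilinearMap 𝕜 (fun _ : Fin n => E) 𝕜,
      ∑ j, c j * ‖G (fun i => x i.succ.succ j)‖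
        ≤ D * ‖G‖ * ∏ i : Fin n, weakNorm 𝕜 r (x i.succ.succ)) :
    ∑ j, c j * ‖A (fun i => x i j)‖
      ≤ C * D * ‖A‖ * ∏ i, weakNorm 𝕜 r (x i) := by
  classical
  set W : ℝ := ∏ i : Fin n, weakNorm 𝕜 r (x i.succ.succ) with hWdef
  have hW : 0 ≤ W := Finset.prod_nonneg fun i _ => weakNorm_nonneg hr _
  set K : ℝ := D * ‖A‖ * W with hKdef
  have hK : 0 ≤ K := by positivity
  -- phases
  choose ε hε1 hε2 using fun j : Fin m => exists_phase (𝕜 := 𝕜) (A (fun i => x i j))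
  -- the bilinear forms
  set B : (Fin m → Bool) → ContinuousMultilinearMap 𝕜 (fun _ : Fin 2 => E) 𝕜 :=
    fun σ => ∑ j, (sgn 𝕜 (σ j) * (c j : 𝕜)) • fixRest A (fun i => x i.succ.succ j) with hBdef
  have hBval : ∀ σ (g : Fin 2 → E),
      B σ g = ∑ j, sgn 𝕜 (σ j) * (c j : 𝕜) *
        A (Fin.cons (g 0) (Fin.cons (g 1) (fun i => x i.succ.succ j))) := by
    intro σ g
    rw [hBdef]
    rw [ContinuousMultilinearMap.sum_apply]
    refine Finset.sum_congr rfl fun j _ => ?_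
    rw [ContinuousMultilinearMap.smul_apply, fixRest_apply, smul_eq_mul]
  -- norm bound for B σ
  have hBnorm : ∀ σ, ‖B σ‖ ≤ K := by
    intro σ
    refine ContinuousMultilinearMap.opNorm_le_bound hK fun g => ?_
    rw [hBval]
    calc ‖∑ j, sgn 𝕜 (σ j) * (c j : 𝕜) *
          A (Fin.cons (g 0) (Fin.cons (g 1) (fun i => x i.succ.succ j)))‖
        ≤ ∑ j, ‖sgn 𝕜 (σ j) * (c j : 𝕜) *
          A (Fin.cons (g 0) (Fin.cons (g 1) (fun i => x i.succ.succ j)))‖ :=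
          norm_sum_le _ _
      _ = ∑ j, c j * ‖fixTwo A (g 0) (g 1) (fun i => x i.succ.succ j)‖ := by
          refine Finset.sum_congr rfl fun j _ => ?_
          rw [norm_mul, norm_mul, norm_sgn, one_mul, RCLike.norm_ofReal,
            abs_of_nonneg (hc j), fixTwo_apply]
      _ ≤ D * ‖fixTwo A (g 0) (g 1)‖ * W := hIH _
      _ ≤ D * (‖A‖ * ‖g 0‖ * ‖g 1‖) * W := by
          gcongr
          exact fixTwo_norm A (g 0) (g 1)
      _ = K * ∏ i, ‖g i‖ := by
          rw [Fin.prod_univ_two, hKdef]; ring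
  -- the two distinguished families
  set X : Fin 2 → Fin m → E := ![x 0, x 1] with hXdef
  set T : ℝ := ∑ j, c j * ‖A (fun i => x i j)‖ with hTdef
  have hT0 : 0 ≤ T := Finset.sum_nonneg fun j _ => mul_nonneg (hc j) (norm_nonneg _)
  have hdec : ∀ k : Fin m,
      A (Fin.cons (x 0 k) (Fin.cons (x 1 k) (fun i => x i.succ.succ k)))
        = A (fun i => x i k) :=
    fun k => congrArg A (cons_decomp (fun i => x i k))
  -- the key identity in 𝕜
  have hid : ∑ σ : Fin m → Bool, ∑ k, sgn 𝕜 (σ k) * ε k * (B σ (fun i => X i k))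
      = ((2 ^ m : ℕ) : 𝕜) * (T : 𝕜) := by
    have step1 : ∀ σ (k : Fin m), sgn 𝕜 (σ k) * ε k * (B σ (fun i => X i k))
        = ∑ j, (sgn 𝕜 (σ k) * sgn 𝕜 (σ j)) *
            (ε k * (c j : 𝕜) *
              A (Fin.cons (x 0 k) (Fin.cons (x 1 k) (fun i => x i.succ.succ j)))) := by
      intro σ k
      rw [hBval, Finset.mul_sum]
      refine Finset.sum_congr rfl fun j _ => ?_
      simp only [hXdef, Matrix.cons_val_zero, Matrix.cons_val_one, Matrix.head_cons]
      ring
    calc ∑ σ : Fin m → Bool, ∑ k, sgn 𝕜 (σ k) * ε k * (B σ (fun i => X i k))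
        = ∑ σ : Fin m → Bool, ∑ k, ∑ j, (sgn 𝕜 (σ k) * sgn 𝕜 (σ j)) *
            (ε k * (c j : 𝕜) *
              A (Fin.cons (x 0 k) (Fin.cons (x 1 k) (fun i => x i.succ.succ j)))) :=
          Finset.sum_congr rfl fun σ _ => Finset.sum_congr rfl fun k _ => step1 σ k
      _ = ∑ k, ∑ j, (∑ σ : Fin m → Bool, sgn 𝕜 (σ k) * sgn 𝕜 (σ j)) *
            (ε k * (c j : 𝕜) *
              A (Fin.cons (x 0 k) (Fin.cons (x 1 k) (fun i => x i.succ.succ j)))) := by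
          rw [Finset.sum_comm]
          exact Finset.sum_congr rfl fun k _ => by
            rw [Finset.sum_comm]
            exact Finset.sum_congr rfl fun j _ => (Finset.sum_mul _ _ _).symm
      _ = ∑ k, ((2 ^ m : ℕ) : 𝕜) *
            (ε k * (c k : 𝕜) * A (fun i => x i k)) := by
          refine Finset.sum_congr rfl fun k _ => ?_
          have : ∀ j : Fin m, (∑ σ : Fin m → Bool, sgn 𝕜 (σ k) * sgn 𝕜 (σ j)) *
              (ε k * (c j : 𝕜) *
                A (Fin.cons (x 0 k) (Fin.cons (x 1 k) (fun i => x i.succ.succ j))))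
              = (if k = j then ((2 ^ m : ℕ) : 𝕜) else 0) *
              (ε k * (c j : 𝕜) *
                A (Fin.cons (x 0 k) (Fin.cons (x 1 k) (fun i => x i.succ.succ j)))) :=
            fun j => by rw [orth k j]
          rw [Finset.sum_congr rfl fun j _ => this j]
          simp only [ite_mul, zero_mul, Finset.sum_ite_eq, Finset.mem_univ, if_pos]
          rw [hdec k]
      _ = ((2 ^ m : ℕ) : 𝕜) * (T : 𝕜) := by
          rw [← Finset.mul_sum]
          congr 1
          rw [hTdef]
          push_cast
          refine Finset.sum_congr rfl fun k _ => ?_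
          rw [show ε k * (c k : 𝕜) * A (fun i => x i k)
              = (c k : 𝕜) * (ε k * A (fun i => x i k)) from by ring, hε2 k]
  -- the real estimate
  have hcard : (Finset.univ : Finset (Fin m → Bool)).card = 2 ^ m := by
    simp [Fintype.card_fun]
  have hmain : ((2 ^ m : ℕ) : ℝ) * T ≤ ((2 ^ m : ℕ) : ℝ) * (C * K * (weakNorm 𝕜 r (x 0) * weakNorm 𝕜 r (x 1))) := by
    have h1 : ((2 ^ m : ℕ) : ℝ) * T = ‖((2 ^ m : ℕ) : 𝕜) * (T : 𝕜)‖ := by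
      rw [norm_mul, RCLike.norm_natCast, RCLike.norm_ofReal, abs_of_nonneg hT0]
    rw [h1, ← hid]
    calc ‖∑ σ : Fin m → Bool, ∑ k, sgn 𝕜 (σ k) * ε k * (B σ (fun i => X i k))‖
        ≤ ∑ σ : Fin m → Bool, ∑ k, ‖sgn 𝕜 (σ k) * ε k * (B σ (fun i => X i k))‖ :=
          (norm_sum_le _ _).trans (Finset.sum_le_sum fun σ _ => norm_sum_le _ _)
      _ ≤ ∑ σ : Fin m → Bool, ∑ k, ‖B σ (fun i => X i k)‖ := by
          refine Finset.sum_le_sum fun σ _ => Finset.sum_le_sum fun k _ => ?_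
          rw [norm_mul, norm_mul, norm_sgn, one_mul]
          exact mul_le_of_le_one_left (norm_nonneg _) (hε1 k)
      _ ≤ ∑ _σ : Fin m → Bool, C * K * (weakNorm 𝕜 r (x 0) * weakNorm 𝕜 r (x 1)) := by
          refine Finset.sum_le_sum fun σ _ => ?_
          have h2 := hbil (B σ) m X
          have h3 : (∏ i : Fin 2, weakNorm 𝕜 r (X i))
              = weakNorm 𝕜 r (x 0) * weakNorm 𝕜 r (x 1) := by
            rw [Fin.prod_univ_two]
            simp [hXdef]
          rw [h3] at h2
          refine h2.trans ?_
          have hw0 : 0 ≤ weakNorm 𝕜 r (x 0) := weakNorm_nonneg hr _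
          have hw1 : 0 ≤ weakNorm 𝕜 r (x 1) := weakNorm_nonneg hr _
          gcongr
          exact hBnorm σ
      _ = ((2 ^ m : ℕ) : ℝ) * (C * K * (weakNorm 𝕜 r (x 0) * weakNorm 𝕜 r (x 1))) := by
          rw [Finset.sum_const, hcard, nsmul_eq_mul]
  have hT : T ≤ C * K * (weakNorm 𝕜 r (x 0) * weakNorm 𝕜 r (x 1)) := by
    have hpos : (0 : ℝ) < ((2 ^ m : ℕ) : ℝ) := by positivity
    exact le_of_mul_le_mul_left hmain hpos
  have hprod : (∏ i, weakNorm 𝕜 r (x i))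
      = weakNorm 𝕜 r (x 0) * (weakNorm 𝕜 r (x 1) * W) := by
    rw [hWdef, Fin.prod_univ_succ, Fin.prod_univ_succ]
    simp [Fin.succ_zero_eq_one]
  rw [← hTdef] at *
  calc T ≤ C * K * (weakNorm 𝕜 r (x 0) * weakNorm 𝕜 r (x 1)) := hT
    _ = C * D * ‖A‖ * ∏ i, weakNorm 𝕜 r (x i) := by
        rw [hprod, hKdef]; ring

end Core

section Main

variable {𝕜 : Type*} [RCLike 𝕜] {E : Type*} [NormedAddCommGroup E] [NormedSpace 𝕜 E]

lemma rpow_sum_scale {r : ℝ} (hr : 0 < r) {m : ℕ} (t : ℝ) (ht : 0 ≤ t) (a : Fin m → ℝ)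
    (ha : ∀ j, 0 ≤ a j) :
    (∑ j, (t * a j) ^ r) ^ (1 / r) = t * (∑ j, a j ^ r) ^ (1 / r) := by
  have h1 : ∀ j : Fin m, (t * a j) ^ r = t ^ r * a j ^ r := fun j =>
    Real.mul_rpow ht (ha j)
  rw [Finset.sum_congr rfl fun j _ => h1 j, ← Finset.mul_sum,
    Real.mul_rpow (Real.rpow_nonneg ht r) (Finset.sum_nonneg fun j _ =>
      Real.rpow_nonneg (ha j) r)]
  congr 1
  rw [← Real.rpow_mul ht, mul_one_div_cancel hr.ne', Real.rpow_one]

lemma main {r C : ℝ} (hr1 : 1 ≤ r) (hC : 0 < C)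
    (hbil : ∀ B : ContinuousMultilinearMap 𝕜 (fun _ : Fin 2 => E) 𝕜,
      ∀ (m : ℕ) (x : Fin 2 → Fin m → E),
        ∑ j, ‖B (fun i => x i j)‖ ≤ C * ‖B‖ * ∏ i, weakNorm 𝕜 r (x i)) :
    ∀ n : ℕ,
      (n % 2 = 1 → ∀ (A : ContinuousMultilinearMap 𝕜 (fun _ : Fin n => E) 𝕜)
          (m : ℕ) (x : Fin n → Fin m → E),
          (∑ j, ‖A (fun i => x i j)‖ ^ r) ^ (1 / r)
            ≤ C ^ ((n - 1) / 2) * ‖A‖ * ∏ i, weakNorm 𝕜 r (x i)) ∧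
      (2 ≤ n → n % 2 = 0 → ∀ (A : ContinuousMultilinearMap 𝕜 (fun _ : Fin n => E) 𝕜)
          (m : ℕ) (x : Fin n → Fin m → E),
          ∑ j, ‖A (fun i => x i j)‖
            ≤ C ^ (n / 2) * ‖A‖ * ∏ i, weakNorm 𝕜 r (x i)) := by
  have hr0 : (0 : ℝ) < r := lt_of_lt_of_le zero_lt_one hr1
  intro n
  induction n using Nat.strong_induction_on with
  | _ n IH =>
  obtain _ | _ | n := n
  · exact ⟨fun h => absurd h (by norm_num), fun h => absurd h (by norm_num)⟩
  · -- n = 1 : odd base case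
    refine ⟨fun _ A m x => ?_, fun h => absurd h (by norm_num)⟩
    have hone : ∀ j : Fin m, A (fun i => x i j)
        = (continuousMultilinearCurryFin1 𝕜 E 𝕜 A) (x 0 j) := by
      intro j
      rw [continuousMultilinearCurryFin1_apply]
      congr 1
      funext i
      obtain rfl : i = 0 := Fin.eq_zero i
      rfl
    have hφn : ‖continuousMultilinearCurryFin1 𝕜 E 𝕜 A‖ = ‖A‖ :=
      (continuousMultilinearCurryFin1 𝕜 E 𝕜).norm_map A
    set φ : E →L[𝕜] 𝕜 := continuousMultilinearCurryFin1 𝕜 E 𝕜 A with hφdef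
    have hprod1 : (∏ i, weakNorm 𝕜 r (x i)) = weakNorm 𝕜 r (x 0) := by
      rw [Fin.prod_univ_one]
    rw [hprod1]
    have hcpow : C ^ ((1 - 1)/2) = 1 := pow_zero C
    rw [hcpow, one_mul]
    rcases eq_or_lt_of_le (norm_nonneg A) with hA0 | hA0
    · have hz : A = 0 := by rwa [eq_comm, norm_eq_zero] at hA0
      subst hz
      have hz1 : (∑ j, ‖(0 : ContinuousMultilinearMap 𝕜 (fun _ : Fin 1 => E) 𝕜)
          (fun i => x i j)‖ ^ r) = 0 :=
        Finset.sum_eq_zero fun j _ => by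
          simp [Real.zero_rpow hr0.ne']
      rw [hz1, Real.zero_rpow (one_div_ne_zero hr0.ne')]
      exact mul_nonneg (norm_nonneg _) (weakNorm_nonneg hr0 (x 0))
    · have hnn : (0:ℝ) ≤ ‖A‖⁻¹ := inv_nonneg.2 (norm_nonneg A)
      have hψ1 : ‖(((‖A‖⁻¹ : ℝ) : 𝕜) • φ)‖ ≤ 1 := by
        rw [norm_smul (((‖A‖⁻¹ : ℝ) : 𝕜)) φ, RCLike.norm_ofReal, abs_of_nonneg hnn, hφn]
        exact le_of_eq (inv_mul_cancel₀ (ne_of_gt hA0))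
      have hle := le_weakNorm hr0 (x 0) (((‖A‖⁻¹ : ℝ) : 𝕜) • φ) hψ1
      have hval : ∀ j : Fin m, ‖(((‖A‖⁻¹ : ℝ) : 𝕜) • φ) (x 0 j)‖
          = ‖A‖⁻¹ * ‖φ (x 0 j)‖ := by
        intro j
        rw [ContinuousLinearMap.smul_apply, norm_smul (((‖A‖⁻¹ : ℝ) : 𝕜)) (φ (x 0 j)),
          RCLike.norm_ofReal, abs_of_nonneg hnn]
      rw [Finset.sum_congr rfl fun j _ => by rw [hval j],
        rpow_sum_scale hr0 _ hnn _ (fun j => norm_nonneg _)] at hle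
      have hfin := mul_le_mul_of_nonneg_left hle (norm_nonneg A)
      rw [← mul_assoc, mul_inv_cancel₀ (ne_of_gt hA0), one_mul] at hfin
      calc (∑ j, ‖A (fun i => x i j)‖ ^ r) ^ (1 / r)
          = (∑ j, ‖φ (x 0 j)‖ ^ r) ^ (1 / r) := by
            rw [Finset.sum_congr rfl fun j _ => by rw [hone j]]
        _ ≤ ‖A‖ * weakNorm 𝕜 r (x 0) := hfin
  · -- n + 2 case
    constructor
    · -- odd part
      intro hpar A m x
      have hnodd : n % 2 = 1 := by omega
      have IHodd := (IH n (by omega)).1 hnodd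
      rw [show (n + 1 + 1 - 1) / 2 = (n - 1) / 2 + 1 from by omega]
      set W2 : ℝ := ∏ i, weakNorm 𝕜 r (x i) with hW2def
      have hW2 : 0 ≤ W2 :=
        Finset.prod_nonneg fun i _ => weakNorm_nonneg hr0 _
      set k : ℕ := (n - 1) / 2 with hkdef
      set N : Fin m → ℝ := fun j => ‖A (fun i => x i j)‖ with hNdef
      have hN : ∀ j, 0 ≤ N j := fun j => norm_nonneg _
      set c : Fin m → ℝ := fun j => N j ^ (r - 1) with hcdef
      have hc : ∀ j, 0 ≤ c j := fun j => Real.rpow_nonneg (hN j) _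
      set S : ℝ := ∑ j, N j ^ r with hSdef
      have hS0 : 0 ≤ S := Finset.sum_nonneg fun j _ => Real.rpow_nonneg (hN j) r
      set L : ℝ := S ^ (1 - 1/r) with hLdef
      have hL0 : 0 ≤ L := Real.rpow_nonneg hS0 _
      have hcN : ∀ j, c j * N j = N j ^ r := by
        intro j
        rcases eq_or_lt_of_le (hN j) with h0 | h0
        · rw [← h0, mul_zero, eq_comm, Real.zero_rpow hr0.ne']
        · rw [hcdef]
          show N j ^ (r - 1) * N j = N j ^ r
          rw [show N j ^ (r-1) * N j = N j ^ (r-1) * N j ^ (1:ℝ) from by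
              rw [Real.rpow_one],
            ← Real.rpow_add h0, sub_add_cancel]
      -- Hölder-type estimate
      have hHold : ∀ a : Fin m → ℝ, (∀ j, 0 ≤ a j) →
          ∑ j, c j * a j ≤ L * (∑ j, a j ^ r) ^ (1/r) := by
        intro a ha
        rcases eq_or_lt_of_le hr1 with hre | hrlt
        · -- r = 1
          rw [hLdef, hcdef, ← hre]
          simp only [sub_self, Real.rpow_zero, one_mul, Real.rpow_one, ne_eq,
            one_ne_zero, not_false_eq_true, div_self, one_div_one]
          exact le_of_eq rfl
        · -- r > 1
          have hr1ne : r - 1 ≠ 0 := ne_of_gt (sub_pos.2 hrlt)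
          have hconj : (r / (r - 1)).HolderConjugate r :=
            (Real.HolderConjugate.conjExponent hrlt).symm
          have hHolder := Real.inner_le_Lp_mul_Lq (Finset.univ) c a hconj
          have hcp : ∀ j : Fin m, |c j| ^ (r / (r-1)) = N j ^ r := by
            intro j
            rw [abs_of_nonneg (hc j), hcdef]
            show (N j ^ (r-1)) ^ (r/(r-1)) = N j ^ r
            rw [← Real.rpow_mul (hN j)]
            congr 1
            field_simp
          have hap : ∀ j : Fin m, |a j| ^ r = a j ^ r := fun j => by
            rw [abs_of_nonneg (ha j)]
          rw [Finset.sum_congr rfl fun j _ => hcp j,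
            Finset.sum_congr rfl fun j _ => hap j] at hHolder
          refine hHolder.trans (le_of_eq ?_)
          congr 1
          rw [hLdef, hSdef]
          congr 1
          rw [one_div_div]
          field_simp
      -- apply the induction hypothesis through Hölder
      have hIHc : ∀ G : ContinuousMultilinearMap 𝕜 (fun _ : Fin n => E) 𝕜,
          ∑ j, c j * ‖G (fun i => x i.succ.succ j)‖
            ≤ (L * C ^ k) * ‖G‖ * ∏ i : Fin n, weakNorm 𝕜 r (x i.succ.succ) := by
        intro G
        refine (hHold _ (fun j => norm_nonneg _)).trans ?_
        have hIHG := IHodd G m (fun i => x i.succ.succ)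
        calc L * (∑ j, ‖G (fun i => x i.succ.succ j)‖ ^ r) ^ (1/r)
            ≤ L * (C ^ k * ‖G‖ * ∏ i : Fin n, weakNorm 𝕜 r (x i.succ.succ)) := by
              gcongr
          _ = (L * C ^ k) * ‖G‖ * ∏ i : Fin n, weakNorm 𝕜 r (x i.succ.succ) := by
              ring
      have hD0 : 0 ≤ L * C ^ k := mul_nonneg hL0 (pow_nonneg hC.le _)
      have hcore := core hr0 hC hbil A x c hc hD0 hIHc
      have hcore' : ∑ j, c j * N j ≤ C * (L * C ^ k) * ‖A‖ * W2 := hcore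
      rw [Finset.sum_congr rfl fun j _ => hcN j, ← hSdef] at hcore'
      have hSle : S ≤ (C ^ (k+1) * ‖A‖ * W2) * L := by
        refine hcore'.trans (le_of_eq ?_)
        rw [pow_succ]
        ring
      show S ^ (1/r) ≤ C ^ (k+1) * ‖A‖ * W2
      have hK0 : 0 ≤ C ^ (k+1) * ‖A‖ * W2 := by positivity
      rcases eq_or_lt_of_le hS0 with h0 | h0
      · rw [← h0, Real.zero_rpow (one_div_ne_zero hr0.ne')]
        exact hK0
      · have hLpos : 0 < L := Real.rpow_pos_of_pos h0 _
        have hmul : S ^ (1/r) * L = S := by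
          rw [hLdef, ← Real.rpow_add h0]
          rw [show 1/r + (1 - 1/r) = 1 from by ring, Real.rpow_one]
        rw [← hmul] at hSle
        exact le_of_mul_le_mul_right hSle hLpos
    · -- even part
      intro h2 hpar A m x
      obtain rfl | hn : n = 0 ∨ 2 ≤ n := by omega
      · refine (hbil A m x).trans (le_of_eq ?_)
        rw [show (0+1+1)/2 = 1 from rfl, pow_one]
      · have IHeven := (IH n (by omega)).2 hn (by omega)
        have hIHc : ∀ G : ContinuousMultilinearMap 𝕜 (fun _ : Fin n => E) 𝕜,
            ∑ j, (1:ℝ) * ‖G (fun i => x i.succ.succ j)‖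
              ≤ C ^ (n/2) * ‖G‖ * ∏ i : Fin n, weakNorm 𝕜 r (x i.succ.succ) := by
          intro G
          simpa using IHeven G m (fun i => x i.succ.succ)
        have h := core hr0 hC hbil A x (fun _ => 1) (fun _ => zero_le_one)
          (pow_nonneg hC.le _) hIHc
        simp only [one_mul] at h
        refine h.trans (le_of_eq ?_)
        rw [show (n+1+1)/2 = n/2 + 1 from by omega, pow_succ]
        ring

end Main

/-- **From bilinear to multilinear coincidences.** If every continuous bilinear form on
`E × E` is absolutely `(1; r, r)`-summing with `π_{(1;r,r)}(B) ≤ C‖B‖` (for some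
`1 ≤ r ≤ 2`), then for every even `n ≥ 2` every continuous `n`-linear form on `E` is
absolutely `(1; r, …, r)`-summing with constant `C^{n/2}‖A‖`, and for every odd `n ≥ 3`
every continuous `n`-linear form on `E` is absolutely `(r; r, …, r)`-summing with constant
`C^{(n−1)/2}‖A‖`. -/
theorem bilinear_to_multilinear {𝕜 : Type*} [RCLike 𝕜]
    (E : Type*) [NormedAddCommGroup E] [NormedSpace 𝕜 E] [CompleteSpace E]
    (r : ℝ) (hr1 : 1 ≤ r) (hr2 : r ≤ 2) (C : ℝ) (hC : 0 < C)
    (hbil : ∀ B : ContinuousMultilinearMap 𝕜 (fun _ : Fin 2 => E) 𝕜,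
      ∀ (m : ℕ) (x : Fin 2 → Fin m → E),
        ∑ j, ‖B (fun i => x i j)‖ ≤ C * ‖B‖ * ∏ i, weakNorm 𝕜 r (x i)) :
    (∀ n : ℕ, 2 ≤ n → Even n → ∀ A : ContinuousMultilinearMap 𝕜 (fun _ : Fin n => E) 𝕜,
      ∀ (m : ℕ) (x : Fin n → Fin m → E),
        ∑ j, ‖A (fun i => x i j)‖ ≤ C ^ (n / 2) * ‖A‖ * ∏ i, weakNorm 𝕜 r (x i)) ∧
    (∀ n : ℕ, 3 ≤ n → Odd n → ∀ A : ContinuousMultilinearMap 𝕜 (fun _ : Fin n => E) 𝕜,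
      ∀ (m : ℕ) (x : Fin n → Fin m → E),
        (∑ j, ‖A (fun i => x i j)‖ ^ r) ^ (1 / r)
          ≤ C ^ ((n - 1) / 2) * ‖A‖ * ∏ i, weakNorm 𝕜 r (x i)) := by
  constructor
  · intro n h2 heven A m x
    exact (main hr1 hC hbil n).2 h2 (Nat.even_iff.mp heven) A m x
  · intro n _ hodd A m x
    exact (main hr1 hC hbil n).1 (Nat.odd_iff.mp hodd) A m x
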